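/- Let β > 0 and c > 0. If c ≥ 2√2 β, then sup_{u > 0} f(c,u) = β² (u*)² + log(c u*) − c u* + 1, where u* = ( c − √(c² − 8β²) ) / (4β²), and the supremum is attained at u = u*. If 0 < c < 2√2 β, then sup_{u > 0} f(c,u) = +∞ (the function u ↦ f(c,u) is unbounded above on (0,∞)). -/

import Mathlib

noncomputable section

namespace SKMulti

/-- The function `f(c,u)` appearing in the Crisanti–Sommers formula for Gaussian spins. -/
def fCS (β c u : ℝ) : ℝ :=
  if u ≤ Real.sqrt 2 / (2 * β) then
    β ^ 2 * u ^ 2 + Real.log (c * u) - c * u + 1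
  else
    (2 * Real.sqrt 2 * β - c) * u + Real.log (c / β) - (1 + Real.log 2) / 2

private lemma logA {t : ℝ} (ht : 0 < t) (ht1 : t ≤ 1) :
    Real.log t ≤ t - 1 - (t - 1) ^ 2 / 2 := by
  have hd : ∀ x ∈ Set.Ioi (0:ℝ),
      HasDerivAt (fun t : ℝ => t - 1 - (t - 1) ^ 2 / 2 - Real.log t)
        (1 - (x - 1) - 1 / x) x := by
    intro x hx
    have hx0 : (0:ℝ) < x := hx
    have h1 : HasDerivAt (fun t : ℝ => t - 1) 1 x := (hasDerivAt_id x).sub_const 1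
    have h2 : HasDerivAt (fun t : ℝ => (t - 1) ^ 2 / 2) (x - 1) x := by
      have := (h1.pow 2).div_const 2
      norm_num at this
      convert this using 1 <;> ring_nf
    have h3 : HasDerivAt Real.log (1 / x) x := by
      simpa [one_div] using Real.hasDerivAt_log (ne_of_gt hx0)
    exact (h1.sub h2).sub h3
  have hanti : AntitoneOn (fun t : ℝ => t - 1 - (t - 1) ^ 2 / 2 - Real.log t) (Set.Ioi 0) := by
    apply antitoneOn_of_deriv_nonpos (convex_Ioi 0)
    · apply ContinuousOn.sub
      · fun_prop
      · exact Real.continuousOn_log.mono (fun x hx => ne_of_gt hx)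
    · intro x hx
      rw [interior_Ioi] at hx
      exact (hd x hx).differentiableAt.differentiableWithinAt
    · intro x hx
      rw [interior_Ioi] at hx
      rw [(hd x hx).deriv]
      have hx0 : (0:ℝ) < x := hx
      have h : 1 - (x - 1) - 1 / x = -((x - 1) ^ 2 / x) := by field_simp; ring
      rw [h]
      have : 0 ≤ (x - 1) ^ 2 / x := by positivity
      linarith
  have := hanti (Set.mem_Ioi.2 ht) (Set.mem_Ioi.2 one_pos) ht1
  simp only [Real.log_one] at this
  norm_num at this
  linarith

private lemma logB {t : ℝ} (ht : 1 ≤ t) :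
    Real.log t ≤ t - 1 - (t - 1) ^ 2 / (2 * t ^ 2) := by
  have hd : ∀ x ∈ Set.Ioi (1:ℝ),
      HasDerivAt (fun t : ℝ => t - 1 - (t - 1) ^ 2 / (2 * t ^ 2) - Real.log t)
        (1 - (x - 1) / x ^ 3 - 1 / x) x := by
    intro x hx
    have hx1 : (1:ℝ) < x := hx
    have hx0 : (0:ℝ) < x := by linarith
    have h1 : HasDerivAt (fun t : ℝ => t - 1) 1 x := (hasDerivAt_id x).sub_const 1
    have hn : HasDerivAt (fun t : ℝ => (t - 1) ^ 2) (2 * (x - 1)) x := by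
      have := h1.pow 2
      norm_num at this
      exact this
    have hden : HasDerivAt (fun t : ℝ => 2 * t ^ 2) (4 * x) x := by
      have := (hasDerivAt_pow 2 x).const_mul (2:ℝ)
      norm_num at this
      rw [show (4:ℝ) * x = 2 * (2 * x) by ring]
      exact this
    have h2 : HasDerivAt (fun t : ℝ => (t - 1) ^ 2 / (2 * t ^ 2))
        ((2 * (x - 1) * (2 * x ^ 2) - (x - 1) ^ 2 * (4 * x)) / (2 * x ^ 2) ^ 2) x := by
      exact hn.div hden (by positivity)
    have h3 : HasDerivAt Real.log (1 / x) x := by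
      simpa [one_div] using Real.hasDerivAt_log (ne_of_gt hx0)
    have heq : (2 * (x - 1) * (2 * x ^ 2) - (x - 1) ^ 2 * (4 * x)) / (2 * x ^ 2) ^ 2
        = (x - 1) / x ^ 3 := by
      field_simp
      ring
    rw [heq] at h2
    exact (h1.sub h2).sub h3
  have hmono : MonotoneOn (fun t : ℝ => t - 1 - (t - 1) ^ 2 / (2 * t ^ 2) - Real.log t)
      (Set.Ici 1) := by
    apply monotoneOn_of_deriv_nonneg (convex_Ici 1)
    · apply ContinuousOn.sub
      · apply ContinuousOn.sub
        · fun_prop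
        · apply ContinuousOn.div
          · fun_prop
          · fun_prop
          · intro x hx
            have : (1:ℝ) ≤ x := hx
            positivity
      · exact Real.continuousOn_log.mono (fun x hx => by
          have : (1:ℝ) ≤ x := hx
          simp only [Set.mem_compl_iff, Set.mem_singleton_iff]
          intro h; rw [h] at this; linarith)
    · intro x hx
      rw [interior_Ici] at hx
      exact (hd x hx).differentiableAt.differentiableWithinAt
    · intro x hx
      rw [interior_Ici] at hx
      rw [(hd x hx).deriv]
      have hx1 : (1:ℝ) < x := hx
      have hx0 : (0:ℝ) < x := by linarith
      have h : 1 - (x - 1) / x ^ 3 - 1 / x = (x - 1) ^ 2 * (x + 1) / x ^ 3 := by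
        field_simp
        ring
      rw [h]
      positivity
  have := hmono (Set.mem_Ici.2 le_rfl) (Set.mem_Ici.2 ht) ht
  simp only [Real.log_one] at this
  norm_num at this
  linarith

private lemma core {a t : ℝ} (ht : 0 < t) (ha : 0 ≤ a) (ha1 : a ≤ 1 / 2)
    (hat : a * t ^ 2 ≤ 1 / 2) :
    a * (t - 1) ^ 2 + Real.log t - (t - 1) ≤ 0 := by
  rcases le_total t 1 with h | h
  · have hl := logA ht h
    nlinarith [mul_nonneg (by linarith : (0:ℝ) ≤ 1 / 2 - a) (sq_nonneg (t - 1))]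
  · have hl := logB h
    have h4 : a * (t - 1) ^ 2 ≤ (t - 1) ^ 2 / (2 * t ^ 2) := by
      rw [le_div_iff₀ (by positivity)]
      nlinarith [mul_nonneg (by linarith : (0:ℝ) ≤ 1 / 2 - a * t ^ 2) (sq_nonneg (t - 1))]
    linarith

set_option maxHeartbeats 2000000 in
/-- the saddle point of the Crisanti–Sommers functional: for `β, c > 0`,
if `c ≥ 2√2 β` then `sup_{u>0} f(c,u)` equals `β²(u*)² + log(c u*) − c u* + 1` with
`u* = (c − √(c² − 8β²))/(4β²)`, the supremum being attained at `u*`; if `c < 2√2 β` then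
`u ↦ f(c,u)` is unbounded above on `(0,∞)`. -/
theorem crisanti_sommers_sup (β c : ℝ) (hβ : 0 < β) (hc : 0 < c) :
    (2 * Real.sqrt 2 * β ≤ c →
      sSup ((fun u => fCS β c u) '' Set.Ioi (0 : ℝ)) =
        β ^ 2 * ((c - Real.sqrt (c ^ 2 - 8 * β ^ 2)) / (4 * β ^ 2)) ^ 2 +
          Real.log (c * ((c - Real.sqrt (c ^ 2 - 8 * β ^ 2)) / (4 * β ^ 2))) -
          c * ((c - Real.sqrt (c ^ 2 - 8 * β ^ 2)) / (4 * β ^ 2)) + 1 ∧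
      fCS β c ((c - Real.sqrt (c ^ 2 - 8 * β ^ 2)) / (4 * β ^ 2)) =
        sSup ((fun u => fCS β c u) '' Set.Ioi (0 : ℝ))) ∧
    (c < 2 * Real.sqrt 2 * β →
      ¬ BddAbove ((fun u => fCS β c u) '' Set.Ioi (0 : ℝ))) := by
  have h2 : Real.sqrt 2 ^ 2 = 2 := Real.sq_sqrt (by norm_num)
  have hs2pos : (0:ℝ) < Real.sqrt 2 := Real.sqrt_pos.2 (by norm_num)
  set ub := Real.sqrt 2 / (2 * β) with hub_def
  clear_value ub
  have hubpos : 0 < ub := by rw [hub_def]; positivity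
  constructor
  · intro hcc
    set s := Real.sqrt (c ^ 2 - 8 * β ^ 2) with hs_def
    clear_value s
    have h8 : 8 * β ^ 2 ≤ c ^ 2 := by
      nlinarith [mul_self_le_mul_self (by positivity : (0:ℝ) ≤ 2 * Real.sqrt 2 * β) hcc]
    have hs_sq : s ^ 2 = c ^ 2 - 8 * β ^ 2 := by
      rw [hs_def]; exact Real.sq_sqrt (by linarith)
    have hs_nn : 0 ≤ s := by rw [hs_def]; positivity
    have hs_lt : s < c := by nlinarith
    set ustar := (c - s) / (4 * β ^ 2) with hustar_def
    clear_value ustar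
    have hustar_pos : 0 < ustar := by
      rw [hustar_def]
      apply div_pos (by linarith) (by positivity)
    have hkey : c * ustar = 2 * β ^ 2 * ustar ^ 2 + 1 := by
      rw [hustar_def]
      field_simp
      nlinarith [hs_sq]
    have hustar_le : ustar ≤ ub := by
      rw [hustar_def, hub_def, div_le_div_iff₀ (by positivity) (by positivity)]
      nlinarith [hs_sq, hs_nn, sq_nonneg (s - (c - 2 * Real.sqrt 2 * β)),
        sq_nonneg (s + (c - 2 * Real.sqrt 2 * β))]
    -- squared bounds
    have hbustar : β ^ 2 * ustar ^ 2 ≤ 1 / 2 := by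
      have h' : ustar * (2 * β) ≤ Real.sqrt 2 := by
        rw [← le_div_iff₀ (by positivity), ← hub_def]
        exact hustar_le
      nlinarith [mul_nonneg hustar_pos.le (by positivity : (0:ℝ) ≤ 2 * β)]
    -- key maximality lemma on the first branch
    have key : ∀ u : ℝ, 0 < u → u ≤ ub →
        β ^ 2 * u ^ 2 + Real.log (c * u) - c * u + 1 ≤
        β ^ 2 * ustar ^ 2 + Real.log (c * ustar) - c * ustar + 1 := by
      intro u hu hule
      have hbu : β ^ 2 * u ^ 2 ≤ 1 / 2 := by
        have h' : u * (2 * β) ≤ Real.sqrt 2 := by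
          rw [← le_div_iff₀ (by positivity), ← hub_def]
          exact hule
        nlinarith [mul_nonneg hu.le (by positivity : (0:ℝ) ≤ 2 * β)]
      have ht : 0 < u / ustar := by positivity
      have hlog : Real.log (c * u) = Real.log (c * ustar) + Real.log (u / ustar) := by
        rw [← Real.log_mul (by positivity) (ne_of_gt ht)]
        congr 1
        field_simp
      rw [hlog]
      set t := u / ustar with htdef
      clear_value t
      have hu_eq : u = t * ustar := by
        rw [htdef]; field_simp
      rw [hu_eq] at hbu ⊢
      have hkt : c * ustar * t = (2 * β ^ 2 * ustar ^ 2 + 1) * t := by rw [hkey]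
      have hgoal := core (a := β ^ 2 * ustar ^ 2) ht (by positivity) hbustar
        (by nlinarith [hbu])
      nlinarith [hgoal, hkt, hkey, sq_nonneg t]
    -- boundary values
    have hhalf : β ^ 2 * ub ^ 2 = 1 / 2 := by
      rw [hub_def, div_pow, h2]
      rw [mul_pow]
      field_simp
    have htwo : 2 * Real.sqrt 2 * β * ub = 2 := by
      have hm : Real.sqrt 2 * Real.sqrt 2 = 2 := Real.mul_self_sqrt (by norm_num)
      rw [hub_def]
      field_simp
      nlinarith [hm]
    have hlogub : Real.log (c * ub) = Real.log (c / β) - Real.log 2 / 2 := by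
      have hsq : Real.log (Real.sqrt 2 / 2) = -(Real.log 2 / 2) := by
        rw [Real.log_div (by positivity) (by norm_num), Real.log_sqrt (by norm_num)]
        ring
      rw [hub_def, show c * (Real.sqrt 2 / (2 * β)) = (c / β) * (Real.sqrt 2 / 2) by
        field_simp]
      rw [Real.log_mul (ne_of_gt (div_pos hc hβ)) (by positivity), hsq]
      ring
    have hboundary : (2 * Real.sqrt 2 * β - c) * ub + Real.log (c / β) - (1 + Real.log 2) / 2
        = β ^ 2 * ub ^ 2 + Real.log (c * ub) - c * ub + 1 := by
      rw [hlogub, hhalf]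
      nlinarith [htwo]
    have hmax : IsGreatest ((fun u => fCS β c u) '' Set.Ioi (0:ℝ)) (fCS β c ustar) := by
      constructor
      · exact ⟨ustar, hustar_pos, rfl⟩
      · rintro y ⟨u, hu, rfl⟩
        have hu' : (0:ℝ) < u := hu
        dsimp only
        by_cases hcase : u ≤ ub
        · simp only [fCS]
          rw [← hub_def, if_pos hcase, if_pos hustar_le]
          exact key u hu' hcase
        · push_neg at hcase
          simp only [fCS]
          rw [← hub_def, if_neg (not_le.2 hcase), if_pos hustar_le]
          have hslope : 2 * Real.sqrt 2 * β - c ≤ 0 := by linarith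
          have h1 : (2 * Real.sqrt 2 * β - c) * u ≤ (2 * Real.sqrt 2 * β - c) * ub := by
            apply mul_le_mul_of_nonpos_left hcase.le hslope
          have h2' := key ub hubpos le_rfl
          linarith [hboundary]
    have hsup := hmax.csSup_eq
    refine ⟨?_, by rw [hsup]⟩
    rw [hsup]
    simp only [fCS]
    rw [← hub_def, if_pos hustar_le]
  · intro hlt hbdd
    obtain ⟨M, hM⟩ := hbdd
    set d := 2 * Real.sqrt 2 * β - c with hd_def
    clear_value d
    have hdpos : 0 < d := by rw [hd_def]; linarith
    set K := Real.log (c / β) - (1 + Real.log 2) / 2 with hK_def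
    clear_value K
    set u0 := max (ub + 1) ((M - K + 1) / d) with hu0_def
    clear_value u0
    have hu0a : ub + 1 ≤ u0 := by rw [hu0_def]; exact le_max_left _ _
    have hu0b : (M - K + 1) / d ≤ u0 := by rw [hu0_def]; exact le_max_right _ _
    have hu0pos : 0 < u0 := lt_of_lt_of_le (by linarith) hu0a
    have hmem : fCS β c u0 ∈ (fun u => fCS β c u) '' Set.Ioi (0:ℝ) :=
      ⟨u0, Set.mem_Ioi.2 hu0pos, rfl⟩
    have hle := hM hmem
    have hval : fCS β c u0 = d * u0 + K := by
      simp only [fCS]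
      rw [← hub_def, if_neg (by push_neg; linarith), hd_def, hK_def]
      ring
    have hge : M - K + 1 ≤ u0 * d := (div_le_iff₀ hdpos).mp hu0b
    rw [hval] at hle
    linarith


end SKMulti
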